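/- Let b, i, j be integers with 0 ≤ i < j ≤ b and j ≥ 1. Then the function g_{j,i} satisfies: (1) for every odd integer ℓ ≥ 1, g_{j,i}(ℓ) ≥ g_{j,i}(ℓ+1); and (2) for every odd integer ℓ > 2i, g_{j,i}(ℓ) ≥ g_{j,i}(ℓ+r) for every integer r ≥ 0. -/

import Mathlib

open Finset
open scoped Classical

/-- `h_{j,i}(ℓ) = (b^{j+i−ℓ}/(b−1)^{j−i})·C(j−i−1, ℓ−2i)`, for integers `0 ≤ i < j`, `ℓ ∈ ℤ`. -/
noncomputable def hFun (b j i : ℕ) (l : ℤ) : ℝ :=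
  ((b : ℝ) ^ ((j : ℤ) + (i : ℤ) - l) / ((b : ℝ) - 1) ^ (j - i)) *
    (Nat.choose (j - i - 1) (l - 2 * (i : ℤ)).toNat : ℝ)

/-- `g_{j,i}(ℓ)`: `0` if `ℓ ≤ 2i`; `(b/(b−1))^{j−i−1}` if `ℓ = 2i+1`;
`1 + h_{j,i}(ℓ)` if `2i+1 < ℓ < j+i` and `ℓ` is odd; `1` otherwise
(i.e. if `ℓ ≥ i+j`, or `ℓ > 2i` and `ℓ` is even). -/
noncomputable def gFun (b j i : ℕ) (l : ℤ) : ℝ :=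
  if l ≤ 2 * (i : ℤ) then 0
  else if l = 2 * (i : ℤ) + 1 then ((b : ℝ) / ((b : ℝ) - 1)) ^ (j - i - 1)
  else if Odd l ∧ l < (j : ℤ) + (i : ℤ) then 1 + hFun b j i l
  else 1

/-- `G(m,s,J,k,d) := Σ_{I ⊊ J} g_{|J|,|I|}(m − |k|_{I*} − |d|_J)`, where `I* = I ∪ Jᶜ`. -/
noncomputable def GFun (b s : ℕ) (J : Finset (Fin s)) (m : ℕ) (k d : Fin s → ℕ) : ℝ :=
  ∑ I ∈ J.powerset.filter (· ≠ J),
    gFun b J.card I.card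
      ((m : ℤ) - ∑ j ∈ I ∪ Jᶜ, (k j : ℤ) - ∑ j ∈ J, (d j : ℤ))

lemma six_choose (m : ℕ) : (m+3).choose 3 * 6 = (m+1)*(m+2)*(m+3) := by
  have h := Nat.choose_mul_factorial_mul_factorial (show 3 ≤ m+3 by omega)
  have h3 : Nat.factorial 3 = 6 := rfl
  have hm : m + 3 - 3 = m := by omega
  rw [h3, hm] at h
  have hfac : (m+3).factorial = (m+1)*(m+2)*(m+3) * m.factorial := by
    rw [Nat.factorial_succ, Nat.factorial_succ, Nat.factorial_succ]; ring
  rw [hfac] at h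
  exact Nat.eq_of_mul_eq_mul_right m.factorial_pos
    (by linarith [h] : (m+3).choose 3 * 6 * m.factorial = ((m+1)*(m+2)*(m+3)) * m.factorial)

lemma choose_step (n b t : ℕ) (h : n ≤ b) : n.choose (t+1) ≤ b * n.choose t :=
  calc n.choose (t+1) ≤ n.choose (t+1) * (t+1) := Nat.le_mul_of_pos_right _ (by omega)
    _ = n.choose t * (n - t) := Nat.choose_succ_right_eq n t
    _ ≤ n.choose t * b := Nat.mul_le_mul_left _ (by omega)
    _ = b * n.choose t := Nat.mul_comm _ _

lemma h_nonneg (b j i : ℕ) (hb : 2 ≤ b) (l : ℤ) : 0 ≤ hFun b j i l := by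
  have h2 : (2:ℝ) ≤ (b:ℝ) := by exact_mod_cast hb
  have hc1 : (0:ℝ) < (b:ℝ) - 1 := by linarith
  have hc : (0:ℝ) < (b:ℝ) := by linarith
  unfold hFun
  positivity

lemma hstep (b i j : ℕ) (hb : 2 ≤ b) (hjb : j ≤ b) (l : ℤ) :
    hFun b j i (l+1) ≤ hFun b j i l := by
  have h2 : (2:ℝ) ≤ (b:ℝ) := by exact_mod_cast hb
  have hc1 : (0:ℝ) < (b:ℝ) - 1 := by linarith
  have hc : (0:ℝ) < (b:ℝ) := by linarith
  have key : (Nat.choose (j-i-1) ((l+1-2*(i:ℤ)).toNat) : ℝ)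
      ≤ (b:ℝ) * Nat.choose (j-i-1) ((l-2*(i:ℤ)).toNat) := by
    have ht : (l + 1 - 2*(i:ℤ)).toNat = (l - 2*(i:ℤ)).toNat ∨
        (l+1-2*(i:ℤ)).toNat = (l-2*(i:ℤ)).toNat + 1 := by omega
    rcases ht with h | h <;> rw [h]
    · have : Nat.choose (j-i-1) ((l-2*(i:ℤ)).toNat) ≤ b * Nat.choose (j-i-1) ((l-2*(i:ℤ)).toNat) :=
        Nat.le_mul_of_pos_left _ (by omega)
      exact_mod_cast this
    · exact_mod_cast choose_step (j-i-1) b _ (by omega)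
  unfold hFun
  have e1 : (b:ℝ)^((j:ℤ)+(i:ℤ)-(l+1)) = (b:ℝ)^((j:ℤ)+(i:ℤ)-l) * ((b:ℝ))⁻¹ := by
    rw [show (j:ℤ)+(i:ℤ)-(l+1) = ((j:ℤ)+(i:ℤ)-l) + (-1) by ring, zpow_add₀ (ne_of_gt hc),
      zpow_neg_one]
  rw [e1]
  have hA : (0:ℝ) ≤ (b:ℝ)^((j:ℤ)+(i:ℤ)-l) / ((b:ℝ)-1)^(j-i) := by positivity
  calc (b:ℝ)^((j:ℤ)+(i:ℤ)-l) * (b:ℝ)⁻¹ / ((b:ℝ)-1)^(j-i) *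
        (Nat.choose (j-i-1) ((l+1-2*(i:ℤ)).toNat) : ℝ)
      = ((b:ℝ)^((j:ℤ)+(i:ℤ)-l) / ((b:ℝ)-1)^(j-i)) *
        ((Nat.choose (j-i-1) ((l+1-2*(i:ℤ)).toNat) : ℝ) / (b:ℝ)) := by
        rw [div_eq_mul_inv, div_eq_mul_inv, div_eq_mul_inv]; ring
    _ ≤ ((b:ℝ)^((j:ℤ)+(i:ℤ)-l) / ((b:ℝ)-1)^(j-i)) *
        (Nat.choose (j-i-1) ((l-2*(i:ℤ)).toNat) : ℝ) := by
        apply mul_le_mul_of_nonneg_left _ hA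
        rw [div_le_iff₀ hc]
        linarith [key]

lemma h_mono (b i j : ℕ) (hb : 2 ≤ b) (hjb : j ≤ b) (l l' : ℤ) (h : l ≤ l') :
    hFun b j i l' ≤ hFun b j i l :=
  Int.le_induction (motive := fun x _ => hFun b j i x ≤ hFun b j i l) le_rfl
    (fun n _ ih => (hstep b i j hb hjb n).trans ih) l' h

lemma g_nonneg (b j i : ℕ) (hb : 2 ≤ b) (l : ℤ) : 0 ≤ gFun b j i l := by
  have h2 : (2:ℝ) ≤ (b:ℝ) := by exact_mod_cast hb
  have hc1 : (0:ℝ) < (b:ℝ) - 1 := by linarith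
  unfold gFun
  split_ifs with h1 h2' h3
  · exact le_rfl
  · positivity
  · linarith [h_nonneg b j i hb l]
  · norm_num

lemma g_ge_one (b j i : ℕ) (hb : 2 ≤ b) (l : ℤ) (hl : 2*(i:ℤ) < l) : 1 ≤ gFun b j i l := by
  have h2 : (2:ℝ) ≤ (b:ℝ) := by exact_mod_cast hb
  have hc1 : (0:ℝ) < (b:ℝ) - 1 := by linarith
  unfold gFun
  rw [if_neg (by omega)]
  split_ifs with h2' h3
  · exact one_le_pow₀ ((one_le_div hc1).mpr (by linarith))
  · linarith [h_nonneg b j i hb l]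
  · exact le_rfl

lemma key_real (m : ℕ) (c : ℝ) (hc : 2 ≤ c) (hnc : ((m:ℝ)+3) ≤ c - 1) :
    1 + c^(m+1)/(c-1)^(m+4) * ((m+3).choose 3) ≤ (c/(c-1))^(m+3) := by
  have hc1 : (1:ℝ) ≤ c - 1 := by linarith
  have hc1' : (0:ℝ) < c - 1 := by linarith
  set x : ℝ := 1/(c-1) with hxdef
  have hx : 0 < x := by positivity
  have hx1 : x ≤ 1 := by rw [hxdef, div_le_one hc1']; linarith
  have h1x : 1 + x = c/(c-1) := by rw [hxdef]; field_simp; ring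
  have hmx : ((m:ℝ)+3) * x ≤ 1 := by
    rw [hxdef, mul_one_div, div_le_one hc1']; exact hnc
  have hm2x : ((m:ℝ)+2) * x ≤ 1 := by nlinarith
  have hm1x : ((m:ℝ)+1) * x ≤ 1 := by nlinarith
  have hCh : (((m+3).choose 3 : ℕ) : ℝ) = ((m:ℝ)+1)*((m:ℝ)+2)*((m:ℝ)+3)/6 := by
    have := six_choose m
    have h6 : (((m+3).choose 3 * 6 : ℕ) : ℝ) = (((m+1)*(m+2)*(m+3) : ℕ) : ℝ) := by
      exact_mod_cast congrArg (Nat.cast : ℕ → ℝ) this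
    push_cast at h6
    linarith
  have hrw : c^(m+1)/(c-1)^(m+4) = x^3 * (1+x)^(m+1) := by
    rw [h1x, hxdef, div_pow, div_pow]
    field_simp
    ring
  rw [hrw, hCh, ← h1x]
  -- bound (1+x)^(m+1) ≤ 3
  have hP3 : (1+x)^(m+1) ≤ 3 := by
    have e1 : (1+x)^(m+1) ≤ Real.exp x ^ (m+1) := by
      apply pow_le_pow_left₀ (by linarith)
      linarith [Real.add_one_le_exp x]
    have e2 : Real.exp x ^ (m+1) = Real.exp (((m:ℝ)+1)*x) := by
      rw [← Real.exp_nat_mul]; push_cast; ring_nf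
    have e3 : Real.exp (((m:ℝ)+1)*x) ≤ Real.exp 1 := Real.exp_le_exp.mpr (by linarith)
    have e4 : Real.exp 1 ≤ 3 := by linarith [Real.exp_one_lt_d9]
    calc (1+x)^(m+1) ≤ Real.exp x ^ (m+1) := e1
      _ = Real.exp (((m:ℝ)+1)*x) := e2
      _ ≤ 3 := le_trans e3 e4
  have hP0 : (0:ℝ) ≤ (1+x)^(m+1) := by positivity
  have hQ : 1 + ((m:ℝ)+3)*x ≤ (1+x)^(m+3) := by
    have := one_add_mul_le_pow (show (-2:ℝ) ≤ x by linarith) (m+3)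
    push_cast at this
    linarith
  have main : x^3 * (1+x)^(m+1) * (((m:ℝ)+1)*((m:ℝ)+2)*((m:ℝ)+3)/6) ≤ ((m:ℝ)+3)*x := by
    have e : x^3 * (1+x)^(m+1) * (((m:ℝ)+1)*((m:ℝ)+2)*((m:ℝ)+3)/6)
        = (((m:ℝ)+1)*x) * (((m:ℝ)+2)*x) * (((m:ℝ)+3)*x) * (1+x)^(m+1) / 6 := by ring
    rw [e]
    have h1 : (((m:ℝ)+1)*x) * (((m:ℝ)+2)*x) * (((m:ℝ)+3)*x) * (1+x)^(m+1) / 6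
        ≤ 1 * 1 * (((m:ℝ)+3)*x) * 3 / 6 := by
      gcongr <;> positivity
    have h2 : (1:ℝ) * 1 * (((m:ℝ)+3)*x) * 3 / 6 = (((m:ℝ)+3)*x)/2 := by ring
    nlinarith
  nlinarith [main, hQ]

lemma keyIneq (b i j : ℕ) (hb : 2 ≤ b) (hij : i < j) (hjb : j ≤ b) :
    1 + hFun b j i (2*(i:ℤ)+3) ≤ ((b:ℝ)/((b:ℝ)-1))^(j-i-1) := by
  have h2 : (2:ℝ) ≤ (b:ℝ) := by exact_mod_cast hb
  have hc1 : (0:ℝ) < (b:ℝ) - 1 := by linarith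
  by_cases hn3 : j - i - 1 < 3
  · have hz : Nat.choose (j-i-1) ((2*(i:ℤ)+3 - 2*(i:ℤ)).toNat) = 0 := by
      apply Nat.choose_eq_zero_of_lt; omega
    unfold hFun
    rw [hz]
    simp only [Nat.cast_zero, mul_zero]
    have : (1:ℝ) ≤ (b:ℝ)/((b:ℝ)-1) := (one_le_div hc1).mpr (by linarith)
    linarith [one_le_pow₀ (n := j - i - 1) this]
  · push_neg at hn3
    obtain ⟨m, hm⟩ : ∃ m, j - i - 1 = m + 3 := ⟨j - i - 1 - 3, by omega⟩
    unfold hFun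
    have ht : ((2*(i:ℤ)+3 - 2*(i:ℤ)).toNat) = 3 := by omega
    have he : (j:ℤ)+(i:ℤ)-(2*(i:ℤ)+3) = ((m+1 : ℕ) : ℤ) := by omega
    have hji : j - i = m + 4 := by omega
    rw [ht, he, hm, hji, zpow_natCast]
    have hnc : ((m:ℝ)+3) ≤ (b:ℝ) - 1 := by
      have : (m:ℕ) + 3 ≤ b - 1 := by omega
      have h' : ((m+3 : ℕ) : ℝ) ≤ ((b-1 : ℕ) : ℝ) := by exact_mod_cast this
      push_cast [Nat.cast_sub (by omega : 1 ≤ b)] at h'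
      linarith
    have := key_real m (b:ℝ) h2 hnc
    linarith

lemma g_le_key (b i j : ℕ) (hb : 2 ≤ b) (hij : i < j) (hjb : j ≤ b)
    (l : ℤ) (hl : 2*(i:ℤ) < l) (hodd : Odd l) (x : ℤ) (hx : l + 2 ≤ x) (hxodd : Odd x)
    (hxlt : x < (j:ℤ) + (i:ℤ)) :
    1 + hFun b j i x ≤ gFun b j i l := by
  by_cases hl1 : l = 2*(i:ℤ)+1
  · rw [gFun, if_neg (by omega), if_pos hl1]
    calc 1 + hFun b j i x ≤ 1 + hFun b j i (2*(i:ℤ)+3) := by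
          linarith [h_mono b i j hb hjb (2*(i:ℤ)+3) x (by omega)]
      _ ≤ _ := keyIneq b i j hb hij hjb
  · rw [gFun, if_neg (by omega), if_neg hl1]
    split_ifs with hband
    · linarith [h_mono b i j hb hjb l x (by omega)]
    · exfalso
      push_neg at hband
      have := hband hodd
      omega

/-- For integers `b, i, j` with `0 ≤ i < j ≤ b` (and `j ≥ 1`):
(1) for every odd integer `ℓ ≥ 1`, `g_{j,i}(ℓ) ≥ g_{j,i}(ℓ+1)`, and
(2) for every odd integer `ℓ > 2i`, `g_{j,i}(ℓ) ≥ g_{j,i}(ℓ+r)` for every integer `r ≥ 0`. -/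
theorem claim_g_monotone (b i j : ℕ) (hb : 2 ≤ b) (hij : i < j) (hjb : j ≤ b) (hj : 1 ≤ j) :
    (∀ l : ℤ, 1 ≤ l → Odd l → gFun b j i (l + 1) ≤ gFun b j i l) ∧
    (∀ l : ℤ, 2 * (i : ℤ) < l → Odd l → ∀ r : ℤ, 0 ≤ r →
      gFun b j i (l + r) ≤ gFun b j i l) := by
  constructor
  · intro l hl hodd
    obtain ⟨k, hk⟩ := hodd
    by_cases h1 : l + 1 ≤ 2*(i:ℤ)
    · rw [gFun, if_pos h1]; exact g_nonneg b j i hb l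
    · have hgt : 2*(i:ℤ) < l := by omega
      have : gFun b j i (l+1) = 1 := by
        rw [gFun, if_neg h1, if_neg (by omega)]
        rw [if_neg]
        rintro ⟨⟨k', hk'⟩, -⟩
        omega
      rw [this]
      exact g_ge_one b j i hb l hgt
  · intro l hl hodd r hr
    rcases eq_or_lt_of_le hr with rfl | hr1
    · simp
    · have hx2 : 2*(i:ℤ)+1 < l + r := by omega
      rw [gFun, if_neg (by omega), if_neg (by omega)]
      split_ifs with hband
      · obtain ⟨hxodd, hxlt⟩ := hband
        have hxl2 : l + 2 ≤ l + r := by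
          obtain ⟨k, hk⟩ := hodd
          obtain ⟨k', hk'⟩ := hxodd
          omega
        exact g_le_key b i j hb hij hjb l hl hodd (l+r) hxl2 hxodd hxlt
      · exact g_ge_one b j i hb l hl
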